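/- Let q ≥ 2 and k ≥ 2 be integers and set n = (q^{k−1} − 1)/(q − 1). Let α be a nonzero element of Z_q of additive order d, and let c ∈ S_{k−1}(q) be a codeword all of whose coordinates lie in the cyclic subgroup ⟨α⟩ of (Z_q, +) generated by α. Then the codeword (α, c + α·𝟏, c + 2α·𝟏, …, c + (q−1)α·𝟏) of M_{k,k−1}(q) has Hamming weight 1 + (q − 1)·n − (q/d)·n + z(c), where z(c) is the number of zero coordinates of c. -/

import Mathlib

/-- Hamming weight of a word over `ZMod q`: the number of nonzero coordinates. -/
def wt {q : ℕ} (l : List (ZMod q)) : ℕ := l.countP (fun x => decide (x ≠ 0))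

/-- The word `(c, α, c + α·𝟏, c + 2α·𝟏, …, c + (q−1)α·𝟏)`, where `𝟏` is the
all-ones vector of the same length as `c`. -/
def simplexWord (q : ℕ) (α : ZMod q) (c : List (ZMod q)) : List (ZMod q) :=
  c ++ α :: (List.range (q - 1)).flatMap (fun i => c.map (fun x => x + ((i + 1 : ℕ) : ZMod q) * α))

/-- The `ZMod q`-Simplex code `S_k(q)` of dimension `k`, as a set of words (lists):
`S_1(q) = ZMod q` (as length-1 words) and
`S_k(q) = {(c, α, c + α·𝟏, …, c + (q−1)α·𝟏) : c ∈ S_{k-1}(q), α ∈ ZMod q}`. -/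
def simplex (q : ℕ) : ℕ → Set (List (ZMod q))
  | 0 => {[]}
  | k + 1 => {w | ∃ c ∈ simplex q k, ∃ α : ZMod q, w = simplexWord q α c}

/-- The word `(α, c + α·𝟏, c + 2α·𝟏, …, c + (q−1)α·𝟏)`. -/
def macWord (q : ℕ) (α : ZMod q) (c : List (ZMod q)) : List (ZMod q) :=
  α :: (List.range (q - 1)).flatMap (fun i => c.map (fun x => x + ((i + 1 : ℕ) : ZMod q) * α))

/-- The `ZMod q`-MacDonald code `M_{k,k-1}(q)`, as a set of words:
`M_{k,k-1}(q) = {(α, c + α·𝟏, …, c + (q−1)α·𝟏) : α ∈ ZMod q, c ∈ S_{k-1}(q)}`. -/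
def macdonald (q k : ℕ) : Set (List (ZMod q)) :=
  {w | ∃ α : ZMod q, ∃ c ∈ simplex q (k - 1), w = macWord q α c}

section Aux

lemma countP_range_mul (d : ℕ) (hd : 0 < d) (f : ℕ → Bool)
    (hf : ∀ j, f j = f (j % d)) (a : ℕ) :
    (List.range (a * d)).countP f = a * (List.range d).countP f := by
  induction a with
  | zero => simp
  | succ a ih =>
    rw [Nat.succ_mul, List.range_add, List.countP_append, ih, List.countP_map]
    have h : List.countP (f ∘ fun x => a * d + x) (List.range d) =
        List.countP f (List.range d) := by
      apply List.countP_congr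
      intro x hx
      have hmod : (a * d + x) % d = x % d := by
        rw [add_comm, Nat.add_mul_mod_self_right]
      simp only [Function.comp]
      rw [hf (a * d + x), hmod, ← hf x]
    rw [h]; ring

lemma countP_range_eq_one (d : ℕ) (p : ℕ → Bool) (j0 : ℕ) (hj0 : j0 < d)
    (h : ∀ j < d, (p j = true ↔ j = j0)) : (List.range d).countP p = 1 := by
  have h1 : (List.range d).countP p = (List.range d).count j0 := by
    unfold List.count
    apply List.countP_congr
    intro x hx
    rw [List.mem_range] at hx
    simp only [beq_iff_eq]
    exact h x hx
  rw [h1, List.count_eq_one_of_mem List.nodup_range (List.mem_range.mpr hj0)]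

lemma cast_mul_eq_of_modEq {q : ℕ} (α : ZMod q) {m n : ℕ}
    (h : m ≡ n [MOD addOrderOf α]) :
    (m : ZMod q) * α = (n : ZMod q) * α := by
  rw [← nsmul_eq_mul, ← nsmul_eq_mul]
  exact nsmul_eq_nsmul_iff_modEq.mpr h

lemma count_range_q (q : ℕ) (hq : 2 ≤ q) (α y : ZMod q)
    (hy : y ∈ AddSubgroup.zmultiples α) :
    (List.range q).countP (fun j : ℕ => decide ((j : ZMod q) * α = y)) = q / addOrderOf α := by
  haveI : NeZero q := ⟨by omega⟩
  have hdpos : 0 < addOrderOf α := addOrderOf_pos α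
  have hdvd : addOrderOf α ∣ q := by
    have h := addOrderOf_dvd_card (x := α)
    rwa [ZMod.card] at h
  obtain ⟨k, hky⟩ := AddSubgroup.mem_zmultiples_iff.mp hy
  have hdne : ((addOrderOf α : ℕ) : ℤ) ≠ 0 := by exact_mod_cast hdpos.ne'
  have hj0nn : (0 : ℤ) ≤ k % (addOrderOf α : ℤ) := Int.emod_nonneg k hdne
  have hj0cast : (((k % (addOrderOf α : ℤ)).toNat : ℕ) : ℤ) = k % (addOrderOf α : ℤ) :=
    Int.toNat_of_nonneg hj0nn
  set j0 : ℕ := (k % (addOrderOf α : ℤ)).toNat with hj0def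
  have hj0lt : j0 < addOrderOf α := by
    have := Int.emod_lt_of_pos k (by exact_mod_cast hdpos : (0:ℤ) < ((addOrderOf α : ℕ) : ℤ))
    omega
  have hj0y : (j0 : ZMod q) * α = y := by
    rw [← nsmul_eq_mul, ← natCast_zsmul, hj0cast, ← hky]
    exact zsmul_eq_zsmul_iff_modEq.mpr (Int.emod_emod_of_dvd k dvd_rfl)
  have huniq : ∀ j < addOrderOf α,
      ((fun j : ℕ => decide ((j : ZMod q) * α = y)) j = true ↔ j = j0) := by
    intro j hj
    simp only [decide_eq_true_eq]
    constructor
    · intro hjy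
      have h1 : (j : ZMod q) * α = (j0 : ZMod q) * α := by rw [hjy, hj0y]
      rw [← nsmul_eq_mul, ← nsmul_eq_mul] at h1
      have hmod := nsmul_eq_nsmul_iff_modEq.mp h1
      unfold Nat.ModEq at hmod
      rw [Nat.mod_eq_of_lt hj, Nat.mod_eq_of_lt hj0lt] at hmod
      exact hmod
    · rintro rfl; exact hj0y
  obtain ⟨a, ha⟩ := hdvd
  have hper : ∀ j, (fun j : ℕ => decide ((j : ZMod q) * α = y)) j
      = (fun j : ℕ => decide ((j : ZMod q) * α = y)) (j % addOrderOf α) := by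
    intro j
    simp only [decide_eq_decide]
    rw [cast_mul_eq_of_modEq α (Nat.mod_modEq j (addOrderOf α)).symm]
  have hrange : List.range q = List.range (a * (addOrderOf α)) := by
    conv_lhs => rw [ha, Nat.mul_comm]
  rw [hrange, countP_range_mul (addOrderOf α) hdpos _ hper a,
    countP_range_eq_one (addOrderOf α) _ j0 hj0lt huniq, mul_one]
  exact (Nat.div_eq_of_eq_mul_left hdpos (ha.trans (mul_comm _ _))).symm

lemma per_elem (q : ℕ) (hq : 2 ≤ q) (α x : ZMod q)
    (hx : x ∈ AddSubgroup.zmultiples α) :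
    (List.range (q - 1)).countP
        (fun i => decide (x + ((i + 1 : ℕ) : ZMod q) * α = 0))
      + (if x = 0 then 1 else 0) = q / addOrderOf α := by
  have h := count_range_q q hq α (-x) (neg_mem hx)
  have hrange : List.range q = 0 :: (List.range (q - 1)).map Nat.succ := by
    conv_lhs => rw [show q = (q - 1) + 1 by omega]
    exact List.range_succ_eq_map
  rw [hrange, List.countP_cons, List.countP_map] at h
  have h0 : (if (decide (((0:ℕ) : ZMod q) * α = -x)) = true then 1 else 0)
      = (if x = 0 then 1 else 0) := by
    simp only [Nat.cast_zero, zero_mul, decide_eq_true_eq]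
    have : ((0 : ZMod q) = -x) ↔ x = 0 := by
      rw [eq_comm, neg_eq_zero]
    simp [this]
  rw [h0] at h
  have hcongr : List.countP ((fun j : ℕ => decide ((j : ZMod q) * α = -x)) ∘ Nat.succ)
      (List.range (q - 1))
      = List.countP (fun i => decide (x + ((i + 1 : ℕ) : ZMod q) * α = 0))
        (List.range (q - 1)) := by
    apply List.countP_congr
    intro i hi
    simp only [Function.comp, Nat.succ_eq_add_one, decide_eq_true_eq]
    constructor <;> intro h <;> linear_combination h
  rw [hcongr] at h
  omega

lemma sum_ite_range (n : ℕ) (p : ℕ → Prop) [DecidablePred p] :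
    ∑ i ∈ Finset.range n, (if p i then 1 else 0)
      = (List.range n).countP (fun i => decide (p i)) := by
  induction n with
  | zero => simp
  | succ n ih =>
    rw [Finset.sum_range_succ, List.range_succ, List.countP_append, ih]
    simp [List.countP_cons]

lemma sum_map_range (n : ℕ) (g : ℕ → ℕ) :
    ((List.range n).map g).sum = ∑ i ∈ Finset.range n, g i := by
  induction n with
  | zero => simp
  | succ n ih =>
    rw [List.range_succ, List.map_append, List.sum_append, Finset.sum_range_succ, ih]
    simp

lemma main_sum (q : ℕ) (hq : 2 ≤ q) (α : ZMod q) (c : List (ZMod q))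
    (hcoord : ∀ x ∈ c, x ∈ AddSubgroup.zmultiples α) :
    (∑ i ∈ Finset.range (q - 1),
        (c.map (fun x => x + ((i + 1 : ℕ) : ZMod q) * α)).countP
          (fun x => decide (x ≠ 0)))
      + (q / addOrderOf α) * c.length
    = (q - 1) * c.length + c.count 0 := by
  induction c with
  | nil => simp
  | cons x c ih =>
    have hx := hcoord x List.mem_cons_self
    have ih' := ih (fun y hy => hcoord y (List.mem_cons_of_mem _ hy))
    simp only [List.map_cons, List.countP_cons, List.count_cons, List.length_cons,
      beq_iff_eq, decide_eq_true_eq]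
    rw [Finset.sum_add_distrib]
    have h1 : (∑ i ∈ Finset.range (q - 1),
          (if x + ((i + 1 : ℕ) : ZMod q) * α ≠ 0 then 1 else 0))
        + (∑ i ∈ Finset.range (q - 1),
          (if x + ((i + 1 : ℕ) : ZMod q) * α = 0 then 1 else 0)) = q - 1 := by
      rw [← Finset.sum_add_distrib]
      have : ∀ i ∈ Finset.range (q - 1),
          ((if x + ((i + 1 : ℕ) : ZMod q) * α ≠ 0 then 1 else 0)
            + (if x + ((i + 1 : ℕ) : ZMod q) * α = 0 then 1 else 0)) = 1 := by
        intro i _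
        split_ifs with h1 h2 <;> simp_all
      rw [Finset.sum_congr rfl this]
      simp
    have h2 : (∑ i ∈ Finset.range (q - 1),
          (if x + ((i + 1 : ℕ) : ZMod q) * α = 0 then 1 else 0))
        + (if x = 0 then 1 else 0) = q / addOrderOf α := by
      rw [sum_ite_range]
      exact per_elem q hq α x hx
    rw [mul_add, mul_add, mul_one, mul_one]
    omega

lemma simplex_length (q : ℕ) (hq : 2 ≤ q) :
    ∀ m, ∀ c ∈ simplex q m, (q - 1) * c.length + 1 = q ^ m := by
  intro m
  induction m with
  | zero =>
    intro c hc
    simp only [simplex, Set.mem_singleton_iff] at hc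
    subst hc
    simp
  | succ m ih =>
    rintro w ⟨c, hc, β, rfl⟩
    have h := ih c hc
    have h2 : List.map (fun i : ℕ => (c.map fun x => x + ((i + 1 : ℕ) : ZMod q) * β).length)
        (List.range (q - 1)) = List.map (fun _ => c.length) (List.range (q - 1)) := by
      apply List.map_congr_left
      intro i _
      simp
    have hlen : (simplexWord q β c).length = q * c.length + 1 := by
      simp only [simplexWord, List.length_append, List.length_cons, List.length_flatMap]
      rw [h2, List.map_const', List.sum_replicate, smul_eq_mul, List.length_range]
      obtain ⟨p, rfl⟩ : ∃ p, q = p + 2 := ⟨q - 2, by omega⟩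
      simp only [show p + 2 - 1 = p + 1 by omega]
      ring
    rw [hlen]
    obtain ⟨p, rfl⟩ : ∃ p, q = p + 2 := ⟨q - 2, by omega⟩
    simp only [show p + 2 - 1 = p + 1 by omega] at h ⊢
    rw [pow_succ, ← h]
    ring

end Aux


/-- For a nonzero `α ∈ ZMod q` of additive order `d` and `c ∈ S_{k−1}(q)` all of
whose coordinates lie in the additive subgroup `⟨α⟩`, the codeword
`(α, c + α·𝟏, …, c + (q−1)α·𝟏)` of `M_{k,k−1}(q)` has Hamming weight
`1 + (q − 1)·n − (q/d)·n + z(c)`, where `n = (q^{k−1} − 1)/(q − 1)` and `z(c)` is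
the number of zero coordinates of `c`. -/
theorem macdonald_subgroup_weight (q k : ℕ) (hq : 2 ≤ q) (hk : 2 ≤ k)
    (α : ZMod q) (hα : α ≠ 0) (d : ℕ) (hd : addOrderOf α = d)
    (c : List (ZMod q)) (hc : c ∈ simplex q (k - 1))
    (hcoord : ∀ x ∈ c, x ∈ AddSubgroup.zmultiples α) :
    wt (macWord q α c) =
      1 + (q - 1) * ((q ^ (k - 1) - 1) / (q - 1))
        - (q / d) * ((q ^ (k - 1) - 1) / (q - 1)) + c.count 0 := by
  subst hd
  have hlen := simplex_length q hq (k - 1) c hc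
  have hn : (q ^ (k - 1) - 1) / (q - 1) = c.length :=
    Nat.div_eq_of_eq_mul_left (by omega) (by rw [mul_comm]; omega)
  rw [hn]
  unfold wt macWord
  rw [List.countP_cons, List.countP_flatMap, sum_map_range]
  have hsum := main_sum q hq α c hcoord
  haveI : NeZero q := ⟨by omega⟩
  have hd2 : 2 ≤ addOrderOf α := by
    have h1 : 0 < addOrderOf α := addOrderOf_pos α
    have h2 : addOrderOf α ≠ 1 := fun h => hα (AddMonoid.addOrderOf_eq_one_iff.mp h)
    omega
  have hmul : (q / addOrderOf α) * c.length ≤ (q - 1) * c.length := by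
    apply Nat.mul_le_mul_right
    have := Nat.div_le_div_left (a := q) hd2 (by norm_num : 0 < 2)
    have := Nat.div_le_self q 2
    omega
  simp only [Function.comp, hα, decide_eq_true_eq, ne_eq, not_false_eq_true, if_true] at *
  omega
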